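/- If {X_1, X_2} is an equitable bipartition of the n-dimensional hypercube graph (each vertex in X_i has exactly e_{ij} neighbors in X_j) and the second eigenvalue μ_2 of the 2×2 quotient matrix satisfies μ_2 ≥ n - 2d, then the characteristic function of X_1 has degree at most d as a multilinear polynomial. -/

import Mathlib

open Finset

namespace Stmt10Aux

variable {n : ℕ}

def cflip (i : Fin n) (x : Fin n → Fin 2) : Fin n → Fin 2 :=
  Function.update x i (x i + 1)

lemma fin2_add_one_ne (a : Fin 2) : a + 1 ≠ a := by revert a; decide

lemma fin2_add_one_add_one (a : Fin 2) : a + 1 + 1 = a := by revert a; decide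

lemma fin2_ne_imp (a b : Fin 2) (h : a ≠ b) : b = a + 1 := by revert a b; decide

lemma flip_apply (i : Fin n) (x : Fin n → Fin 2) (j : Fin n) :
    cflip i x j = if j = i then x i + 1 else x j := Function.update_apply ..

lemma flip_apply_self (i : Fin n) (x : Fin n → Fin 2) : cflip i x i = x i + 1 := by
  simp [flip_apply]

lemma flip_flip (i : Fin n) (x : Fin n → Fin 2) : cflip i (cflip i x) = x := by
  funext j
  by_cases h : j = i
  · subst h; simp [flip_apply, fin2_add_one_add_one]
  · simp [flip_apply, h]

lemma flip_involutive (i : Fin n) : Function.Involutive (cflip i) := fun x => flip_flip i x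

lemma flip_inj (x : Fin n → Fin 2) {i j : Fin n} (h : cflip i x = cflip j x) : i = j := by
  by_contra hij
  have h1 : cflip i x i = x i + 1 := flip_apply_self i x
  have h2 : cflip j x i = x i := by simp [flip_apply, hij]
  rw [h] at h1
  exact fin2_add_one_ne (x i) (h2 ▸ h1).symm

lemma hamming_flip (i : Fin n) (x : Fin n → Fin 2) : hammingDist x (cflip i x) = 1 := by
  rw [hammingDist]
  have : (univ.filter fun j => x j ≠ cflip i x j) = {i} := by
    ext j
    by_cases h : j = i
    · subst h; simp [flip_apply, (fin2_add_one_ne (x j)).symm]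
    · simp [flip_apply, h]
  rw [this, card_singleton]

lemma exists_flip {x y : Fin n → Fin 2} (h : hammingDist x y = 1) : ∃ i, y = cflip i x := by
  rw [hammingDist, Finset.card_eq_one] at h
  obtain ⟨i, hi⟩ := h
  refine ⟨i, funext fun j => ?_⟩
  by_cases hj : j = i
  · subst hj
    have : j ∈ univ.filter fun k => x k ≠ y k := by rw [hi]; exact mem_singleton_self j
    have hne : x j ≠ y j := (mem_filter.mp this).2
    rw [flip_apply_self]
    exact fin2_ne_imp _ _ hne
  · have : j ∉ univ.filter fun k => x k ≠ y k := by rw [hi]; simp [hj]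
    have hxy : ¬ x j ≠ y j := by simpa using this
    rw [flip_apply, if_neg hj]
    exact (not_ne_iff.mp hxy).symm

lemma card_filter_flip (x : Fin n → Fin 2) (p : (Fin n → Fin 2) → Prop) [DecidablePred p] :
    (univ.filter fun y => hammingDist x y = 1 ∧ p y).card
      = (univ.filter fun i : Fin n => p (cflip i x)).card := by
  refine (Finset.card_bij (fun i _ => cflip i x) ?_ ?_ ?_).symm
  · intro i hi
    simp only [mem_filter, mem_univ, true_and] at hi ⊢
    exact ⟨hamming_flip i x, hi⟩
  · intro i _ j _ h
    exact flip_inj x h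
  · intro y hy
    simp only [mem_filter, mem_univ, true_and] at hy
    obtain ⟨i, rfl⟩ := exists_flip hy.1
    exact ⟨i, by simp [hy.2], rfl⟩

noncomputable def chi (S : Finset (Fin n)) (x : Fin n → Fin 2) : ℝ :=
  ∏ i ∈ S, (-1 : ℝ) ^ ((x i : ℕ))

lemma neg_one_pow_add_one (a : Fin 2) :
    ((-1 : ℝ)) ^ (((a + 1 : Fin 2)) : ℕ) = -((-1 : ℝ) ^ ((a : ℕ))) := by
  fin_cases a <;> simp [show ((0:Fin 2)+1)=1 from rfl, show ((1:Fin 2)+1)=0 from rfl]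

lemma fin2_sign (a b : Fin 2) :
    (-1 : ℝ) ^ ((a : ℕ)) * (-1 : ℝ) ^ ((b : ℕ)) = if a = b then 1 else -1 := by
  fin_cases a <;> fin_cases b <;> norm_num

lemma fin2_poly (a : Fin 2) : (-1 : ℝ) ^ ((a : ℕ)) = (-2 : ℝ) * ((a : ℕ) : ℝ) + 1 := by
  fin_cases a <;> norm_num

lemma chi_flip (S : Finset (Fin n)) (i : Fin n) (x : Fin n → Fin 2) :
    chi S (cflip i x) = (if i ∈ S then (-1 : ℝ) else 1) * chi S x := by
  by_cases hi : i ∈ S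
  · rw [if_pos hi, chi, chi, ← Finset.mul_prod_erase _ _ hi, ← Finset.mul_prod_erase _ _ hi]
    have h2 : ∀ j ∈ S.erase i, (-1:ℝ)^((cflip i x j : ℕ)) = (-1:ℝ)^((x j : ℕ)) := by
      intro j hj; rw [flip_apply, if_neg (Finset.ne_of_mem_erase hj)]
    rw [Finset.prod_congr rfl h2, flip_apply_self, neg_one_pow_add_one]; ring
  · rw [if_neg hi, one_mul, chi, chi]
    refine Finset.prod_congr rfl fun j hj => ?_
    rw [flip_apply, if_neg (fun h : j = i => hi (h ▸ hj))]

lemma sum_flip (g : (Fin n → Fin 2) → ℝ) (i : Fin n) :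
    ∑ x : Fin n → Fin 2, g (cflip i x) = ∑ x : Fin n → Fin 2, g x := by
  exact Equiv.sum_comp ((flip_involutive i).toPerm _) g

lemma sum_subsets (a : Fin n → ℝ) :
    ∑ S : Finset (Fin n), ∏ i ∈ S, a i = ∏ i : Fin n, (a i + 1) := by
  rw [Finset.prod_add]
  rw [← Finset.powerset_univ]
  exact (Finset.sum_congr rfl fun t _ => by rw [Finset.prod_const_one, mul_one]).symm

lemma chi_orth (x y : Fin n → Fin 2) :
    ∑ S : Finset (Fin n), chi S x * chi S y = if y = x then (2:ℝ)^n else 0 := by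
  have key : ∀ S : Finset (Fin n), chi S x * chi S y
      = ∏ i ∈ S, ((-1:ℝ)^((x i : ℕ)) * (-1:ℝ)^((y i : ℕ))) := fun S =>
    (Finset.prod_mul_distrib).symm
  simp only [key]
  rw [sum_subsets]
  by_cases h : y = x
  · subst h
    rw [if_pos rfl]
    have : ∀ i : Fin n, (-1:ℝ)^((y i : ℕ)) * (-1:ℝ)^((y i : ℕ)) + 1 = 2 := by
      intro i; rw [fin2_sign, if_pos rfl]; norm_num
    simp only [this]
    simp
  · rw [if_neg h]
    obtain ⟨i, hi⟩ := Function.ne_iff.mp (fun hh => h (hh.symm))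
    refine Finset.prod_eq_zero (mem_univ i) ?_
    rw [fin2_sign, if_neg hi]
    norm_num

lemma chi_sum_zero {S : Finset (Fin n)} (hS : S.Nonempty) :
    ∑ x : Fin n → Fin 2, chi S x = 0 := by
  obtain ⟨i, hi⟩ := hS
  have h1 : ∑ x : Fin n → Fin 2, chi S x = ∑ x : Fin n → Fin 2, chi S (cflip i x) :=
    (sum_flip (chi S) i).symm
  simp only [chi_flip, if_pos hi, neg_one_mul, Finset.sum_neg_distrib] at h1
  linarith

lemma chi_expand (S : Finset (Fin n)) (x : Fin n → Fin 2) :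
    chi S x = ∑ T ∈ S.powerset, (-2:ℝ)^T.card * ∏ i ∈ T, ((x i : ℕ) : ℝ) := by
  rw [chi, Finset.prod_congr rfl (fun i (_ : i ∈ S) => fin2_poly (x i))]
  have h2 : ∀ i ∈ S, (-2:ℝ) * ((x i : ℕ) : ℝ) + 1
      = (fun i => (-2:ℝ) * ((x i : ℕ) : ℝ)) i + (fun _ => (1:ℝ)) i := fun _ _ => rfl
  rw [Finset.prod_add]
  refine Finset.sum_congr rfl fun T hT => ?_
  rw [Finset.prod_const_one, mul_one, Finset.prod_mul_distrib, Finset.prod_const]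

end Stmt10Aux

open Finset Stmt10Aux

/-- If `{X₁, X₂}` is an equitable bipartition of the hypercube graph on `{0,1}^n` whose
quotient matrix has second eigenvalue `μ₂ ≥ n - 2d`, then the characteristic function of
`X₁` is a multilinear polynomial of degree at most `d`. -/
theorem stmt_10 (n d : ℕ)
    (P : Fin 2 → Finset (Fin n → Fin 2))
    (hdisj : Disjoint (P 0) (P 1))
    (hcover : P 0 ∪ P 1 = Finset.univ)
    (hne : ∀ i, (P i).Nonempty)
    (e : Fin 2 → Fin 2 → ℕ)
    (hequit : ∀ i j, ∀ x ∈ P i,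
      (Finset.univ.filter (fun y => hammingDist x y = 1 ∧ y ∈ P j)).card = e i j)
    (Q : Matrix (Fin 2) (Fin 2) ℝ) (hQ : ∀ i j, Q i j = (e i j : ℝ))
    (μ₂ : ℝ)
    (hμ₂ : Q.charpoly = (Polynomial.X - Polynomial.C (n : ℝ)) * (Polynomial.X - Polynomial.C μ₂))
    (hbound : (n : ℝ) - 2 * d ≤ μ₂) :
    ∃ c : Finset (Fin n) → ℝ, (∀ S, d < S.card → c S = 0) ∧
      ∀ x : Fin n → Fin 2,
        (if x ∈ P 0 then (1 : ℝ) else 0) =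
          ∑ S : Finset (Fin n), c S * ∏ i ∈ S, ((x i : ℕ) : ℝ) := by
  classical
  set f : (Fin n → Fin 2) → ℝ := fun x => if x ∈ P 0 then 1 else 0 with hf
  have hmem : ∀ x : Fin n → Fin 2, x ∉ P 0 → x ∈ P 1 := by
    intro x hx
    have hx2 : x ∈ P 0 ∪ P 1 := by rw [hcover]; exact mem_univ x
    rcases mem_union.mp hx2 with h | h
    · exact absurd h hx
    · exact h
  have hkey : ∀ x : Fin n → Fin 2, ∑ i : Fin n, f (cflip i x) =
      (e 0 0 : ℝ) * f x + (e 1 0 : ℝ) * (1 - f x) := by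
    intro x
    have hsum : ∑ i : Fin n, f (cflip i x)
        = ((univ.filter fun i : Fin n => cflip i x ∈ P 0).card : ℝ) := by
      simp [hf, Finset.sum_boole]
    rw [hsum, ← card_filter_flip x (· ∈ P 0)]
    by_cases hx : x ∈ P 0
    · rw [hequit 0 0 x hx]; simp [hf, hx]
    · rw [hequit 1 0 x (hmem x hx)]; simp [hf, hx]
  have htr : (e 0 0 : ℝ) + (e 1 1 : ℝ) = (n : ℝ) + μ₂ := by
    have h1 : Q.trace = -(Q.charpoly.coeff (Fintype.card (Fin 2) - 1)) := by
      rw [Matrix.trace_eq_neg_charpoly_coeff]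
    have h2 : ((Polynomial.X - Polynomial.C (n:ℝ)) * (Polynomial.X - Polynomial.C μ₂)).coeff 1
        = -((n:ℝ) + μ₂) := by
      have hexp : (Polynomial.X - Polynomial.C (n:ℝ)) * (Polynomial.X - Polynomial.C μ₂)
          = Polynomial.X^2 - Polynomial.C ((n:ℝ) + μ₂) * Polynomial.X
            + Polynomial.C ((n:ℝ)*μ₂) := by
        rw [Polynomial.C_add, Polynomial.C_mul]; ring
      rw [hexp]
      simp
    rw [hμ₂] at h1
    simp only [Fintype.card_fin] at h1
    rw [h2] at h1
    rw [Matrix.trace_fin_two, hQ, hQ] at h1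
    linarith
  have hrow : (e 1 0 : ℝ) + (e 1 1 : ℝ) = (n : ℝ) := by
    obtain ⟨x, hx⟩ := hne 1
    have h0 := hequit 1 0 x hx
    have h1 := hequit 1 1 x hx
    rw [card_filter_flip x (· ∈ P 0)] at h0
    rw [card_filter_flip x (· ∈ P 1)] at h1
    have hcongr : (univ.filter fun i : Fin n => cflip i x ∈ P 1)
        = univ.filter fun i : Fin n => ¬ (cflip i x ∈ P 0) := by
      refine Finset.filter_congr fun i _ => ?_
      constructor
      · intro h1' h0'
        exact Finset.disjoint_left.mp hdisj h0' h1'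
      · intro h
        exact hmem _ h
    have hsplit := Finset.card_filter_add_card_filter_not
      (s := (univ : Finset (Fin n))) (p := fun i : Fin n => cflip i x ∈ P 0)
    rw [h0, ← hcongr, h1, card_univ, Fintype.card_fin] at hsplit
    exact_mod_cast hsplit
  have hmu : μ₂ = (e 0 0 : ℝ) - (e 1 0 : ℝ) := by linarith
  set F : Finset (Fin n) → ℝ := fun S => ∑ x : Fin n → Fin 2, f x * chi S x with hF
  have hFzero : ∀ S : Finset (Fin n), d < S.card → F S = 0 := by
    intro S hSd
    have hSne : S.Nonempty := card_pos.mp (lt_of_le_of_lt (Nat.zero_le d) hSd)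
    have lhs_eq : ∑ x : Fin n → Fin 2, (∑ i : Fin n, f (cflip i x)) * chi S x
        = ((n:ℝ) - 2 * S.card) * F S := by
      calc ∑ x : Fin n → Fin 2, (∑ i : Fin n, f (cflip i x)) * chi S x
          = ∑ x : Fin n → Fin 2, ∑ i : Fin n, f (cflip i x) * chi S x :=
            Finset.sum_congr rfl fun x _ => Finset.sum_mul _ _ _
        _ = ∑ i : Fin n, ∑ x : Fin n → Fin 2, f (cflip i x) * chi S x := Finset.sum_comm
        _ = ∑ i : Fin n, ∑ x : Fin n → Fin 2, f x * chi S (cflip i x) := by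
            refine Finset.sum_congr rfl fun i _ => ?_
            calc ∑ x : Fin n → Fin 2, f (cflip i x) * chi S x
                = ∑ x : Fin n → Fin 2, f (cflip i x) * chi S (cflip i (cflip i x)) := by
                  simp [Stmt10Aux.flip_flip]
              _ = ∑ x : Fin n → Fin 2, f x * chi S (cflip i x) :=
                  sum_flip (fun y => f y * chi S (cflip i y)) i
        _ = ∑ i : Fin n, (if i ∈ S then (-1:ℝ) else 1) * F S := by
            refine Finset.sum_congr rfl fun i _ => ?_
            simp only [chi_flip, hF]
            rw [Finset.mul_sum]
            refine Finset.sum_congr rfl fun x _ => ?_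
            ring
        _ = ((n:ℝ) - 2 * S.card) * F S := by
            rw [← Finset.sum_mul]
            congr 1
            have hite : ∀ i : Fin n, (if i ∈ S then (-1:ℝ) else 1)
                = 1 - 2 * (if i ∈ S then (1:ℝ) else 0) := by
              intro i; split <;> norm_num
            simp only [hite]
            rw [Finset.sum_sub_distrib, Finset.sum_const, ← Finset.mul_sum, Finset.sum_boole]
            have hfs : univ.filter (fun i : Fin n => i ∈ S) = S := by ext i; simp
            rw [hfs, card_univ, Fintype.card_fin]
            simp
    have rhs_eq : ∑ x : Fin n → Fin 2,
        ((e 0 0 : ℝ) * f x + (e 1 0 : ℝ) * (1 - f x)) * chi S x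
        = (e 0 0 : ℝ) * F S + (e 1 0 : ℝ) * (0 - F S) := by
      have hz := chi_sum_zero hSne
      have hexp : ∀ x : Fin n → Fin 2,
          ((e 0 0 : ℝ) * f x + (e 1 0 : ℝ) * (1 - f x)) * chi S x
          = (e 0 0 : ℝ) * (f x * chi S x)
            + (e 1 0 : ℝ) * (chi S x - f x * chi S x) := by
        intro x; ring
      simp only [hexp]
      rw [Finset.sum_add_distrib, ← Finset.mul_sum, ← Finset.mul_sum,
        Finset.sum_sub_distrib, hz, hF]
    have heq : ((n:ℝ) - 2 * S.card) * F S
        = (e 0 0 : ℝ) * F S + (e 1 0 : ℝ) * (0 - F S) := by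
      rw [← lhs_eq, ← rhs_eq]
      exact Finset.sum_congr rfl fun x _ => by rw [hkey x]
    by_contra hFne
    have h2 : ((n:ℝ) - 2 * S.card - ((e 0 0 : ℝ) - (e 1 0 : ℝ))) * F S = 0 := by
      linear_combination heq
    rcases mul_eq_zero.mp h2 with h3 | h3
    · have hcard : (n:ℝ) - 2 * S.card = μ₂ := by rw [hmu]; linarith
      have hle : (S.card : ℝ) ≤ (d : ℝ) := by linarith
      have : S.card ≤ d := by exact_mod_cast hle
      omega
    · exact hFne h3
  have hinv : ∀ x : Fin n → Fin 2,
      f x = (∑ S : Finset (Fin n), F S * chi S x) / 2^n := by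
    intro x
    have hkey2 : ∑ S : Finset (Fin n), F S * chi S x = f x * 2^n := by
      simp only [hF]
      calc ∑ S : Finset (Fin n), (∑ y : Fin n → Fin 2, f y * chi S y) * chi S x
          = ∑ S : Finset (Fin n), ∑ y : Fin n → Fin 2, f y * (chi S y * chi S x) := by
            refine Finset.sum_congr rfl fun S _ => ?_
            rw [Finset.sum_mul]
            exact Finset.sum_congr rfl fun y _ => by ring
        _ = ∑ y : Fin n → Fin 2, ∑ S : Finset (Fin n), f y * (chi S y * chi S x) :=
            Finset.sum_comm
        _ = ∑ y : Fin n → Fin 2, f y * (if x = y then (2:ℝ)^n else 0) := by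
            refine Finset.sum_congr rfl fun y _ => ?_
            rw [← Finset.mul_sum, chi_orth]
        _ = f x * 2^n := by
            simp only [mul_ite, mul_zero]
            rw [Finset.sum_ite_eq univ x (fun y => f y * 2^n)]
            simp
    rw [hkey2]
    field_simp
  refine ⟨fun T => (-2:ℝ)^T.card * (∑ S ∈ univ.filter fun S => T ⊆ S, F S) / 2^n, ?_, ?_⟩
  · intro T hT
    have hzero : ∀ S ∈ univ.filter (fun S : Finset (Fin n) => T ⊆ S), F S = 0 := by
      intro S hS
      exact hFzero S (lt_of_lt_of_le hT (card_le_card (mem_filter.mp hS).2))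
    show ((-2:ℝ)^T.card * (∑ S ∈ univ.filter fun S => T ⊆ S, F S)) / 2^n = 0
    rw [Finset.sum_eq_zero hzero, mul_zero, zero_div]
  · intro x
    have hstart : (if x ∈ P 0 then (1:ℝ) else 0) = f x := rfl
    rw [hstart, hinv x]
    calc (∑ S : Finset (Fin n), F S * chi S x) / 2^n
        = (∑ S : Finset (Fin n), ∑ T ∈ S.powerset,
            F S * ((-2:ℝ)^T.card * ∏ i ∈ T, ((x i : ℕ):ℝ))) / 2^n := by
          congr 1
          refine Finset.sum_congr rfl fun S _ => ?_
          rw [chi_expand, Finset.mul_sum]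
      _ = (∑ T : Finset (Fin n), ∑ S ∈ univ.filter (fun S : Finset (Fin n) => T ⊆ S),
            F S * ((-2:ℝ)^T.card * ∏ i ∈ T, ((x i : ℕ):ℝ))) / 2^n := by
          congr 1
          refine Finset.sum_comm' fun S T => ?_
          simp [Finset.mem_powerset]
      _ = ∑ T : Finset (Fin n),
            ((-2:ℝ)^T.card * (∑ S ∈ univ.filter (fun S : Finset (Fin n) => T ⊆ S), F S) / 2^n)
              * ∏ i ∈ T, ((x i : ℕ):ℝ) := by
          rw [Finset.sum_div]
          refine Finset.sum_congr rfl fun T _ => ?_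
          rw [← Finset.sum_mul]
          ring
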